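/- arXiv:2505.20696 — 3 statements merged into one kernel-verified Lean document; each statement's English description precedes it below -/
import Mathlib

section
/- Let A be an n×n real symmetric diagonally dominant matrix with nonnegative diagonal (i.e., a_{ii} ≥ Σ_{j≠i}|a_{ij}| for all i). Decompose the off-diagonal part as P − (−N) where P contains the positive off-diagonal entries, N the negative off-diagonal entries, set D = diag((P − N)𝟙) (row sums of absolute off-diagonal values) and S = diag(a_{ii} − d_{ii}) the diagonal slack. Then the 2n×2n augmented matrix L = [[D + N' + S/2, −(P + S/2)], [−(P + S/2), D + N' + S/2]], where N' denotes the matrix of absolute values of negative off-diagonal entries placed appropriately, is a symmetric matrix with nonpositive off-diagonal entries and zero row sums, i.e., a graph Laplacian. -/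
open Matrix

theorem stmt_4 {n : ℕ} (A : Matrix (Fin n) (Fin n) ℝ)
    (hsym : A.IsSymm)
    (hdd : ∀ i, ∑ j ∈ Finset.univ.erase i, |A i j| ≤ A i i)
    (P N D S : Matrix (Fin n) (Fin n) ℝ)
    (hP : P = Matrix.of fun i j => if i = j then 0 else max (A i j) 0)
    (hN : N = Matrix.of fun i j => if i = j then 0 else min (A i j) 0)
    (hD : D = Matrix.diagonal fun i => (∑ j, P i j) - (∑ j, N i j))
    (hS : S = Matrix.diagonal fun i => A i i - D i i)
    (L : Matrix (Fin n ⊕ Fin n) (Fin n ⊕ Fin n) ℝ)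
    (hL : L = Matrix.fromBlocks (D + N + (1/2 : ℝ) • S) (-(P + (1/2 : ℝ) • S))
                                (-(P + (1/2 : ℝ) • S)) (D + N + (1/2 : ℝ) • S)) :
    L.IsSymm ∧ (∀ i j, i ≠ j → L i j ≤ 0) ∧ (∀ i, ∑ j, L i j = 0) := by
  have hA : ∀ i j, A j i = A i j := fun i j => hsym.apply i j
  -- D i i computed
  have hDii : ∀ i, D i i = ∑ j ∈ Finset.univ.erase i, |A i j| := by
    intro i
    rw [hD, Matrix.diagonal_apply_eq, ← Finset.sum_sub_distrib,
      ← Finset.add_sum_erase _ _ (Finset.mem_univ i)]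
    have h0 : P i i - N i i = 0 := by simp [hP, hN]
    rw [h0, zero_add]
    apply Finset.sum_congr rfl
    intro j hj
    have hij : i ≠ j := fun h => (Finset.mem_erase.mp hj).1 h.symm
    simp [hP, hN, hij, max_sub_min_eq_abs]
  have hSnn : ∀ i, 0 ≤ S i i := by
    intro i
    rw [hS, Matrix.diagonal_apply_eq, hDii]
    linarith [hdd i]
  have hPnn : ∀ i j, 0 ≤ P i j := by intro i j; simp only [hP, Matrix.of_apply]; split <;> simp
  have hNnp : ∀ i j, N i j ≤ 0 := by intro i j; simp only [hN, Matrix.of_apply]; split <;> simp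
  have hPsym : ∀ i j, P j i = P i j := by intro i j; simp only [hP, Matrix.of_apply]; rw [hA]; simp [eq_comm]
  have hNsym : ∀ i j, N j i = N i j := by intro i j; simp only [hN, Matrix.of_apply]; rw [hA]; simp [eq_comm]
  have hDd : ∀ i j, i ≠ j → D i j = 0 := fun i j h => by rw [hD]; exact Matrix.diagonal_apply_ne _ h
  have hSd : ∀ i j, i ≠ j → S i j = 0 := fun i j h => by rw [hS]; exact Matrix.diagonal_apply_ne _ h
  refine ⟨?_, ?_, ?_⟩
  · -- symmetry
    ext i j
    rw [Matrix.transpose_apply, hL]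
    rcases i with i | i <;> rcases j with j | j <;>
      simp only [Matrix.fromBlocks_apply₁₁, Matrix.fromBlocks_apply₁₂,
        Matrix.fromBlocks_apply₂₁, Matrix.fromBlocks_apply₂₂,
        Matrix.add_apply, Matrix.neg_apply, Matrix.smul_apply, smul_eq_mul]
    · rcases eq_or_ne i j with h | h
      · rw [h]
      · rw [hDd _ _ h, hDd _ _ h.symm, hSd _ _ h, hSd _ _ h.symm, hNsym]
    · rcases eq_or_ne i j with h | h
      · rw [h]
      · rw [hSd _ _ h, hSd _ _ h.symm, hPsym]
    · rcases eq_or_ne i j with h | h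
      · rw [h]
      · rw [hSd _ _ h, hSd _ _ h.symm, hPsym]
    · rcases eq_or_ne i j with h | h
      · rw [h]
      · rw [hDd _ _ h, hDd _ _ h.symm, hSd _ _ h, hSd _ _ h.symm, hNsym]
  · -- nonpositive off-diagonal
    intro i j hij
    rw [hL]
    rcases i with i | i <;> rcases j with j | j <;>
      simp only [Matrix.fromBlocks_apply₁₁, Matrix.fromBlocks_apply₁₂,
        Matrix.fromBlocks_apply₂₁, Matrix.fromBlocks_apply₂₂,
        Matrix.add_apply, Matrix.neg_apply, Matrix.smul_apply, smul_eq_mul]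
    · have h : i ≠ j := fun h => hij (by rw [h])
      rw [hDd _ _ h, hSd _ _ h]
      simpa using hNnp i j
    · rcases eq_or_ne i j with h | h
      · rw [h]; have := hSnn j; have := hPnn j j; nlinarith
      · rw [hSd _ _ h]; have := hPnn i j; linarith
    · rcases eq_or_ne i j with h | h
      · rw [h]; have := hSnn j; have := hPnn j j; nlinarith
      · rw [hSd _ _ h]; have := hPnn i j; linarith
    · have h : i ≠ j := fun h => hij (by rw [h])
      rw [hDd _ _ h, hSd _ _ h]
      simpa using hNnp i j
  · -- row sums
    have key : ∀ i, (∑ j, (D + N + (1/2 : ℝ) • S) i j) + (∑ j, (-(P + (1/2 : ℝ) • S)) i j) = 0 := by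
      intro i
      have hDsum : ∑ j, D i j = D i i := by
        rw [Finset.sum_eq_single i]
        · intro j _ hji; exact hDd i j (Ne.symm hji)
        · simp
      have hSsum : ∑ j, S i j = S i i := by
        rw [Finset.sum_eq_single i]
        · intro j _ hji; exact hSd i j (Ne.symm hji)
        · simp
      have hDval : D i i = (∑ j, P i j) - (∑ j, N i j) := by rw [hD]; simp
      simp only [Matrix.add_apply, Matrix.neg_apply, Matrix.smul_apply, smul_eq_mul,
        Finset.sum_add_distrib, Finset.sum_neg_distrib, ← Finset.mul_sum]
      rw [hDsum, hSsum, hDval]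
      ring
    intro i
    rw [hL]
    rcases i with i | i
    · rw [Fintype.sum_sum_type]; simpa using key i
    · rw [Fintype.sum_sum_type]
      have := key i
      simp only [Matrix.add_apply, Matrix.neg_apply, Matrix.smul_apply, smul_eq_mul] at this ⊢
      simp only [Matrix.fromBlocks_apply₂₁, Matrix.fromBlocks_apply₂₂,
        Matrix.add_apply, Matrix.neg_apply, Matrix.smul_apply, smul_eq_mul]
      linarith
end

section
/- With A symmetric diagonally dominant and L its 2n×2n Laplacian augmentation, if x' = (u, v) ∈ ℝ^{2n} is any solution of L x' = (b, −b), then x = (u − v)/2 solves A x = b. -/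
open Matrix

theorem stmt_6 {n : ℕ} (A : Matrix (Fin n) (Fin n) ℝ)
    (hsym : A.IsSymm)
    (hdd : ∀ i, ∑ j ∈ Finset.univ.erase i, |A i j| ≤ A i i)
    (P N D S : Matrix (Fin n) (Fin n) ℝ)
    (hP : P = Matrix.of fun i j => if i = j then 0 else max (A i j) 0)
    (hN : N = Matrix.of fun i j => if i = j then 0 else min (A i j) 0)
    (hD : D = Matrix.diagonal fun i => (∑ j, P i j) - (∑ j, N i j))
    (hS : S = Matrix.diagonal fun i => A i i - D i i)
    (L : Matrix (Fin n ⊕ Fin n) (Fin n ⊕ Fin n) ℝ)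
    (hL : L = Matrix.fromBlocks (D + N + (1/2 : ℝ) • S) (-(P + (1/2 : ℝ) • S))
                                (-(P + (1/2 : ℝ) • S)) (D + N + (1/2 : ℝ) • S))
    (u v b : Fin n → ℝ) (hx : L *ᵥ (Sum.elim u v) = Sum.elim b (-b)) :
    A *ᵥ ((1/2 : ℝ) • (u - v)) = b := by
  set M1 := D + N + (1/2 : ℝ) • S with hM1
  set M2 := P + (1/2 : ℝ) • S with hM2
  have hA : A = M1 + M2 := by
    ext i j
    by_cases h : i = j
    · subst h
      simp [hM1, hM2, hP, hN, hS, Matrix.add_apply, Matrix.smul_apply,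
        Matrix.diagonal_apply_eq]
      ring
    · simp [hM1, hM2, hP, hN, hS, hD, Matrix.add_apply, Matrix.smul_apply,
        Matrix.diagonal_apply_ne _ h, h]
  subst hL
  rw [Matrix.fromBlocks_mulVec] at hx
  have e1 : M1 *ᵥ u + (-M2) *ᵥ v = b := funext fun i => congrFun hx (Sum.inl i)
  have e2 : (-M2) *ᵥ u + M1 *ᵥ v = -b := funext fun i => congrFun hx (Sum.inr i)
  have key : (M1 + M2) *ᵥ (u - v) = (2 : ℝ) • b := by
    have := congrArg₂ (· - ·) e1 e2
    simp only [Matrix.neg_mulVec] at this ⊢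
    rw [Matrix.add_mulVec, Matrix.mulVec_sub, Matrix.mulVec_sub]
    ext i
    have hi := congrFun this i
    simp [Pi.sub_apply, Pi.add_apply, Pi.neg_apply, Pi.smul_apply] at hi ⊢
    linarith
  rw [hA, Matrix.mulVec_smul, key]
  ext i
  simp
end

section
/- Consequently, under the hypotheses above, the spectral condition number of the truncated-Neumann-preconditioned matrix satisfies κ(M_m^{-1} A) = (1 − μ_min^{m+1})/(1 − μ_max^{m+1}) ≤ κ(A), where μ_min ≤ μ_max are the extreme eigenvalues of R = I − A, with equality only in degenerate cases; in particular κ(M_m^{-1}A) is nonincreasing in m. -/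
open Matrix

-- auxiliary: termwise power estimate
private lemma aux_key {a b : ℝ} (ha : 0 ≤ a) (hab : a ≤ b) (m : ℕ) :
    a ^ (m + 1) * ∑ k ∈ Finset.range (m + 1), b ^ k ≤
      b ^ (m + 1) * ∑ k ∈ Finset.range (m + 1), a ^ k := by
  have hb0 : (0 : ℝ) ≤ b := le_trans ha hab
  rw [Finset.mul_sum, Finset.mul_sum]
  apply Finset.sum_le_sum
  intro k hk
  obtain ⟨j, hj⟩ : ∃ j, m + 1 = k + j := ⟨m + 1 - k, by have := Finset.mem_range.mp hk; omega⟩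
  rw [hj, pow_add, pow_add]
  have hpow : a ^ j ≤ b ^ j := pow_le_pow_left₀ ha hab j
  have hnn : (0 : ℝ) ≤ a ^ k * b ^ k := mul_nonneg (pow_nonneg ha k) (pow_nonneg hb0 k)
  nlinarith [mul_le_mul_of_nonneg_left hpow hnn]

private lemma aux_factor (a : ℝ) (N : ℕ) :
    1 - a ^ N = (1 - a) * ∑ k ∈ Finset.range N, a ^ k := by
  linear_combination geom_sum_mul a N

private lemma aux_ratio {a b : ℝ} (ha : 0 ≤ a) (hab : a ≤ b) (hb : b < 1) (m : ℕ) :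
    (1 - a ^ (m + 1)) / (1 - b ^ (m + 1)) ≤ (1 - a) / (1 - b) := by
  have hb0 : (0 : ℝ) ≤ b := le_trans ha hab
  have hbp : 0 < 1 - b ^ (m + 1) := by
    have : b ^ (m + 1) < 1 := pow_lt_one₀ hb0 hb (Nat.succ_ne_zero m)
    linarith
  have hb1 : 0 < 1 - b := by linarith
  have ha1 : (0:ℝ) ≤ 1 - a := by linarith
  rw [div_le_div_iff₀ hbp hb1]
  have hsum : ∑ k ∈ Finset.range (m + 1), a ^ k ≤ ∑ k ∈ Finset.range (m + 1), b ^ k :=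
    Finset.sum_le_sum fun k _ => pow_le_pow_left₀ ha hab k
  calc (1 - a ^ (m + 1)) * (1 - b)
      = ((1 - a) * (1 - b)) * ∑ k ∈ Finset.range (m + 1), a ^ k := by
        rw [aux_factor a (m + 1)]; ring
    _ ≤ ((1 - a) * (1 - b)) * ∑ k ∈ Finset.range (m + 1), b ^ k :=
        mul_le_mul_of_nonneg_left hsum (mul_nonneg ha1 hb1.le)
    _ = (1 - a) * (1 - b ^ (m + 1)) := by rw [aux_factor b (m + 1)]; ring

private lemma aux_anti {a b : ℝ} (ha : 0 ≤ a) (hab : a ≤ b) (hb : b < 1) :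
    Antitone (fun m : ℕ => (1 - a ^ (m + 1)) / (1 - b ^ (m + 1))) := by
  have hb0 : (0 : ℝ) ≤ b := le_trans ha hab
  have hbp : ∀ N : ℕ, 0 < 1 - b ^ (N + 1) := fun N => by
    have : b ^ (N + 1) < 1 := pow_lt_one₀ hb0 hb (Nat.succ_ne_zero N)
    linarith
  apply antitone_nat_of_succ_le
  intro m
  show (1 - a ^ (m + 1 + 1)) / (1 - b ^ (m + 1 + 1)) ≤ (1 - a ^ (m + 1)) / (1 - b ^ (m + 1))
  rw [div_le_div_iff₀ (hbp (m + 1)) (hbp m)]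
  have ha1 : (0:ℝ) ≤ 1 - a := by linarith [le_trans hab hb.le]
  have hb1 : (0:ℝ) ≤ 1 - b := by linarith
  have key := aux_key ha hab m
  have hSa : ∑ k ∈ Finset.range (m + 2), a ^ k
      = (∑ k ∈ Finset.range (m + 1), a ^ k) + a ^ (m + 1) := Finset.sum_range_succ _ _
  have hTb : ∑ k ∈ Finset.range (m + 2), b ^ k
      = (∑ k ∈ Finset.range (m + 1), b ^ k) + b ^ (m + 1) := Finset.sum_range_succ _ _
  calc (1 - a ^ (m + 1 + 1)) * (1 - b ^ (m + 1))
      = ((1 - a) * (1 - b)) *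
        ((∑ k ∈ Finset.range (m + 2), a ^ k) * ∑ k ∈ Finset.range (m + 1), b ^ k) := by
        rw [aux_factor a (m + 2), aux_factor b (m + 1)]; ring
    _ ≤ ((1 - a) * (1 - b)) *
        ((∑ k ∈ Finset.range (m + 1), a ^ k) * ∑ k ∈ Finset.range (m + 2), b ^ k) := by
        apply mul_le_mul_of_nonneg_left _ (mul_nonneg ha1 hb1)
        rw [hSa, hTb]
        nlinarith [key]
    _ = (1 - a ^ (m + 1)) * (1 - b ^ (m + 1 + 1)) := by
        rw [aux_factor a (m + 1), aux_factor b (m + 2)]; ring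

theorem stmt_16 {n : ℕ} (A : Matrix (Fin n) (Fin n) ℝ)
    (hA : A.IsHermitian)
    (hspec : ∀ i, hA.eigenvalues i ∈ Set.Ioo (0 : ℝ) 1)
    (R : Matrix (Fin n) (Fin n) ℝ) (hR : R = 1 - A)
    (lammin lammax mumin mumax : ℝ)
    (hmin : IsLeast (spectrum ℝ A) lammin) (hmax : IsGreatest (spectrum ℝ A) lammax)
    (hmumin : mumin = 1 - lammax) (hmumax : mumax = 1 - lammin) :
    (∀ m : ℕ,
      IsGreatest (spectrum ℝ ((∑ k ∈ Finset.range (m + 1), R ^ k) * A))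
        (1 - mumin ^ (m + 1)) ∧
      IsLeast (spectrum ℝ ((∑ k ∈ Finset.range (m + 1), R ^ k) * A))
        (1 - mumax ^ (m + 1)) ∧
      (1 - mumin ^ (m + 1)) / (1 - mumax ^ (m + 1)) ≤ lammax / lammin) ∧
    Antitone (fun m : ℕ => (1 - mumin ^ (m + 1)) / (1 - mumax ^ (m + 1))) := by
  have hIoo : ∀ x ∈ spectrum ℝ A, x ∈ Set.Ioo (0 : ℝ) 1 := by
    rw [hA.spectrum_real_eq_range_eigenvalues]
    rintro x ⟨i, rfl⟩
    exact hspec i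
  have hminIoo := hIoo lammin hmin.1
  have hmaxIoo := hIoo lammax hmax.1
  have hle : lammin ≤ lammax := hmin.2 hmax.1
  -- basic facts about mumin, mumax
  have hmu0 : 0 ≤ mumin := by rw [hmumin]; linarith [hmaxIoo.2]
  have hmuab : mumin ≤ mumax := by rw [hmumin, hmumax]; linarith
  have hmub : mumax < 1 := by rw [hmumax]; linarith [hminIoo.1]
  constructor
  · intro m
    -- matrix identity: (∑ R^k) * A = 1 - R^(m+1)
    have hRA : R - 1 = -A := by rw [hR]; abel
    have hgeom : (∑ k ∈ Finset.range (m + 1), R ^ k) * (R - 1) = R ^ (m + 1) - 1 :=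
      geom_sum_mul R (m + 1)
    rw [hRA, mul_neg] at hgeom
    have hM : (∑ k ∈ Finset.range (m + 1), R ^ k) * A = 1 - R ^ (m + 1) := by
      rw [← neg_inj, hgeom, neg_sub]
    -- functional calculus
    set q : Polynomial ℝ := 1 - (1 - Polynomial.X) ^ (m + 1) with hq
    have haev : Polynomial.aeval A q = 1 - (1 - A) ^ (m + 1) := by
      simp [hq]
    have hcfc : cfc q.eval A = (∑ k ∈ Finset.range (m + 1), R ^ k) * A := by
      rw [cfc_polynomial q A hA.isSelfAdjoint, haev, hM, hR]
    have hmap : spectrum ℝ ((∑ k ∈ Finset.range (m + 1), R ^ k) * A)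
        = q.eval '' spectrum ℝ A := by
      rw [← hcfc]
      exact cfc_map_spectrum q.eval A (hf := q.continuous.continuousOn) (ha := hA.isSelfAdjoint)
    have heval : ∀ x : ℝ, q.eval x = 1 - (1 - x) ^ (m + 1) := by
      intro x; simp [hq]
    refine ⟨?_, ?_, ?_⟩
    · rw [hmap]
      constructor
      · exact ⟨lammax, hmax.1, by simp only [heval, hmumin]⟩
      · rintro y ⟨x, hx, rfl⟩
        simp only [heval, hmumin]
        have hx1 : x ≤ lammax := hmax.2 hx
        have : (1 - lammax) ^ (m + 1) ≤ (1 - x) ^ (m + 1) :=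
          pow_le_pow_left₀ (by linarith [hmaxIoo.2]) (by linarith) _
        linarith
    · rw [hmap]
      constructor
      · exact ⟨lammin, hmin.1, by simp only [heval, hmumax]⟩
      · rintro y ⟨x, hx, rfl⟩
        simp only [heval, hmumax]
        have hx1 : lammin ≤ x := hmin.2 hx
        have hxI := hIoo x hx
        have : (1 - x) ^ (m + 1) ≤ (1 - lammin) ^ (m + 1) :=
          pow_le_pow_left₀ (by linarith [hxI.2]) (by linarith) _
        linarith
    · have := aux_ratio hmu0 hmuab hmub m
      have h1 : 1 - mumin = lammax := by rw [hmumin]; ring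
      have h2 : 1 - mumax = lammin := by rw [hmumax]; ring
      rwa [h1, h2] at this
  · exact aux_anti hmu0 hmuab hmub
end
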